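/- Let H be a finite bipartite simple graph of order at least 4 all of whose connected components are cactus graphs. Then |V(H)| ≥ (3/4)|E(H)| + 1, i.e., 4|V(H)| ≥ 3|E(H)| + 4. -/

import Mathlib

open SimpleGraph

/-- A connected graph is a cactus if no edge is shared by two different cycles,
i.e. any two cycles having a common edge have the same edge set. -/
def isCactus {α : Type*} (K : SimpleGraph α) : Prop :=
  K.Connected ∧ ∀ ⦃u v : α⦄ (c₁ : K.Walk u u) (c₂ : K.Walk v v),
    c₁.IsCycle → c₂.IsCycle → ∀ e, e ∈ c₁.edges → e ∈ c₂.edges →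
      ∀ e', e' ∈ c₁.edges ↔ e' ∈ c₂.edges

/-- Every connected component of `H` is a cactus. -/
def allComponentsCactus {α : Type*} (H : SimpleGraph α) : Prop :=
  ∀ c : H.ConnectedComponent, isCactus (H.induce c.supp)

/-- `H` is bipartite: the vertices can be partitioned into two sets with no edge inside either. -/
def isBipartite {α : Type*} (H : SimpleGraph α) : Prop :=
  ∃ A : Set α, ∀ ⦃u v : α⦄, H.Adj u v → (u ∈ A ↔ v ∉ A)

/-- The "global" cactus condition: any two cycles of the whole graph sharing an
edge have the same edge sets. -/
def globCactus {α : Type*} (G : SimpleGraph α) : Prop :=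
  ∀ ⦃u v : α⦄ (c₁ : G.Walk u u) (c₂ : G.Walk v v),
    c₁.IsCycle → c₂.IsCycle → ∀ e, e ∈ c₁.edges → e ∈ c₂.edges →
      ∀ e', e' ∈ c₁.edges ↔ e' ∈ c₂.edges

section Lemmas

variable {V : Type*}

/-- A walk whose support lies in `s` lifts to the induced graph on `s`. -/
lemma lift_walk {G : SimpleGraph V} {s : Set V} :
    ∀ {u v : V} (w : G.Walk u v) (hu : u ∈ s) (hv : v ∈ s),
      (∀ x ∈ w.support, x ∈ s) →
      ∃ w' : (G.induce s).Walk ⟨u, hu⟩ ⟨v, hv⟩,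
        w'.map (Embedding.induce s).toHom = w := by
  intro u v w
  induction w with
  | nil => intro hu hv _; exact ⟨.nil, rfl⟩
  | @cons u x v h p ih =>
    intro hu hv hs
    have hx : x ∈ s := hs x (by simp)
    obtain ⟨p', hp'⟩ := ih hx hv (fun y hy => hs y (by simp [hy]))
    have h' : (G.induce s).Adj ⟨u, hu⟩ ⟨x, hx⟩ := h
    exact ⟨.cons h' p', by rw [Walk.map_cons, hp']; rfl⟩

lemma mk_eq_of_mem_support {G : SimpleGraph V} {u v z : V} (w : G.Walk u v)
    (hz : z ∈ w.support) :
    G.connectedComponentMk z = G.connectedComponentMk u := by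
  classical
  exact ConnectedComponent.eq.mpr ⟨(w.takeUntil z hz).reverse⟩

lemma glob_of_components {H : SimpleGraph V} (hcac : allComponentsCactus H) :
    globCactus H := by
  intro u v c₁ c₂ h₁ h₂ e he₁ he₂
  revert he₁ he₂
  refine Sym2.ind (fun x y he₁ he₂ e' => ?_) e
  set K := H.connectedComponentMk u with hK
  have hxc₁ : x ∈ c₁.support := c₁.fst_mem_support_of_mem_edges he₁
  have hxc₂ : x ∈ c₂.support := c₂.fst_mem_support_of_mem_edges he₂
  have hvu : H.connectedComponentMk v = H.connectedComponentMk u := by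
    rw [← mk_eq_of_mem_support c₂ hxc₂, mk_eq_of_mem_support c₁ hxc₁]
  have hsup₁ : ∀ z ∈ c₁.support, z ∈ K.supp := fun z hz => by
    rw [ConnectedComponent.mem_supp_iff, hK]
    exact mk_eq_of_mem_support c₁ hz
  have hsup₂ : ∀ z ∈ c₂.support, z ∈ K.supp := fun z hz => by
    rw [ConnectedComponent.mem_supp_iff, hK, ← hvu]
    exact mk_eq_of_mem_support c₂ hz
  have hu : u ∈ K.supp := hsup₁ u c₁.start_mem_support
  have hv : v ∈ K.supp := hsup₂ v c₂.start_mem_support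
  obtain ⟨c₁', hc₁'⟩ := lift_walk c₁ hu hu hsup₁
  obtain ⟨c₂', hc₂'⟩ := lift_walk c₂ hv hv hsup₂
  have hinj : Function.Injective (Embedding.induce (G := H) K.supp).toHom :=
    Subtype.val_injective
  have hcyc₁ : c₁'.IsCycle :=
    (Walk.map_isCycle_iff_of_injective hinj).mp (hc₁' ▸ h₁)
  have hcyc₂ : c₂'.IsCycle :=
    (Walk.map_isCycle_iff_of_injective hinj).mp (hc₂' ▸ h₂)
  have hedges₁ : c₁.edges = c₁'.edges.map (Sym2.map Subtype.val) := by
    rw [← hc₁']; exact Walk.edges_map _ _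
  have hedges₂ : c₂.edges = c₂'.edges.map (Sym2.map Subtype.val) := by
    rw [← hc₂']; exact Walk.edges_map _ _
  rw [hedges₁, List.mem_map] at he₁
  rw [hedges₂, List.mem_map] at he₂
  obtain ⟨d₁, hd₁, hmap₁⟩ := he₁
  obtain ⟨d₂, hd₂, hmap₂⟩ := he₂
  have hdd : d₂ = d₁ := Sym2.map.injective Subtype.val_injective (by rw [hmap₁, hmap₂])
  have key := (hcac K).2 c₁' c₂' hcyc₁ hcyc₂ d₁ hd₁ (hdd ▸ hd₂)
  rw [hedges₁, hedges₂]
  constructor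
  · rintro hm
    rw [List.mem_map] at hm ⊢
    obtain ⟨d, hd, hdm⟩ := hm
    exact ⟨d, (key d).mp hd, hdm⟩
  · rintro hm
    rw [List.mem_map] at hm ⊢
    obtain ⟨d, hd, hdm⟩ := hm
    exact ⟨d, (key d).mpr hd, hdm⟩

lemma walk_even {G : SimpleGraph V} {A : Set V}
    (hA : ∀ ⦃u v⦄, G.Adj u v → (u ∈ A ↔ v ∉ A)) {u v : V} (p : G.Walk u v) :
    Even p.length ↔ (u ∈ A ↔ v ∈ A) := by
  induction p with
  | nil => exact iff_of_true Even.zero Iff.rfl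
  | cons h p ih =>
    have := hA h
    rw [Walk.length_cons, Nat.even_add_one, ih]
    tauto

lemma cycle_map_le {G G' : SimpleGraph V} (h : G' ≤ G) {u : V} {p : G'.Walk u u}
    (hp : p.IsCycle) : ∃ q : G.Walk u u, q.IsCycle ∧ q.edges = p.edges := by
  refine ⟨p.map (Hom.ofLE h), ?_, ?_⟩
  · exact (Walk.map_isCycle_iff_of_injective (fun a b hab => by
      simpa using hab)).mpr hp
  · rw [Walk.edges_map]
    have h2 : ∀ e : Sym2 V, Sym2.map (⇑(Hom.ofLE h)) e = e := fun e =>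
      Sym2.ind (fun x y => by simp) e
    rw [List.map_congr_left fun e _ => h2 e]
    exact List.map_id _

lemma glob_anti {G G' : SimpleGraph V} (h : G' ≤ G) (hg : globCactus G) :
    globCactus G' := by
  intro u v c₁ c₂ h₁ h₂ e he₁ he₂ e'
  obtain ⟨q₁, hq₁, heq₁⟩ := cycle_map_le h h₁
  obtain ⟨q₂, hq₂, heq₂⟩ := cycle_map_le h h₂
  have := hg q₁ q₂ hq₁ hq₂ e (heq₁ ▸ he₁) (heq₂ ▸ he₂) e'
  rwa [heq₁, heq₂] at this

lemma bip_anti {G G' : SimpleGraph V} (h : G' ≤ G) (hb : isBipartite G) :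
    isBipartite G' := by
  obtain ⟨A, hA⟩ := hb
  exact ⟨A, fun _ _ ha => hA (h ha)⟩

lemma no_cycle_del {G : SimpleGraph V} (hg : globCactus G) {a : V} {c : G.Walk a a}
    (hc : c.IsCycle) {e₀ : Sym2 V} (he₀ : e₀ ∈ c.edges) {G' : SimpleGraph V}
    (hle : G' ≤ G.deleteEdges {e₀}) {f : Sym2 V} (hf : f ∈ c.edges) :
    ∀ ⦃w : V⦄ (p : G'.Walk w w), p.IsCycle → f ∉ p.edges := by
  intro w p hp hfp
  obtain ⟨q, hq, heq⟩ := cycle_map_le (hle.trans (G.deleteEdges_le _)) hp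
  have hiff := hg c q hc hq f hf (heq ▸ hfp)
  have h1 : e₀ ∈ p.edges := heq ▸ (hiff e₀).mp he₀
  have h2 : e₀ ∈ G'.edgeSet := p.edges_subset_edgeSet h1
  have h3 : e₀ ∈ (G.deleteEdges {e₀}).edgeSet := edgeSet_mono hle h2
  rw [edgeSet_deleteEdges] at h3
  exact h3.2 rfl

lemma card_add_one_le {α β : Type*} [Finite α] {f : α → β} (hf : Function.Surjective f)
    {a b : α} (hab : a ≠ b) (hfab : f a = f b) :
    Nat.card β + 1 ≤ Nat.card α := by
  have : Finite β := Finite.of_surjective f hf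
  have hginj : Function.Injective (Function.surjInv hf) := Function.injective_surjInv hf
  have hcard : (Set.range (Function.surjInv hf)).ncard = Nat.card β := by
    rw [← Nat.card_coe_set_eq, Nat.card_range_of_injective hginj]
  have hkey : a ∉ Set.range (Function.surjInv hf) ∨ b ∉ Set.range (Function.surjInv hf) := by
    by_contra hcon
    push_neg at hcon
    obtain ⟨⟨x, hx⟩, ⟨y, hy⟩⟩ := hcon
    apply hab
    have hfa : f a = x := by rw [← hx]; exact Function.surjInv_eq hf x
    have hfb : f b = y := by rw [← hy]; exact Function.surjInv_eq hf y
    rw [← hx, ← hy, ← hfa, hfab, hfb]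
  obtain ⟨cc, hcm⟩ : ∃ cc, cc ∉ Set.range (Function.surjInv hf) := by
    rcases hkey with h | h
    · exact ⟨a, h⟩
    · exact ⟨b, h⟩
  calc Nat.card β + 1 = (insert cc (Set.range (Function.surjInv hf))).ncard := by
        rw [Set.ncard_insert_of_notMem hcm (Set.toFinite _), hcard]
    _ ≤ (Set.univ : Set α).ncard :=
        Set.ncard_le_ncard (Set.subset_univ _) Set.finite_univ
    _ = Nat.card α := Set.ncard_univ α

lemma comp_map_surj {G G' : SimpleGraph V} (h : G' ≤ G) :
    Function.Surjective (ConnectedComponent.map (Hom.ofLE h)) := by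
  intro C
  refine C.ind fun v => ?_
  exact ⟨G'.connectedComponentMk v, by simp [ConnectedComponent.map_mk]⟩

lemma card_comp_le [Finite V] {G G' : SimpleGraph V} (h : G' ≤ G) :
    Nat.card G.ConnectedComponent ≤ Nat.card G'.ConnectedComponent :=
  Nat.card_le_card_of_surjective _ (comp_map_surj h)

lemma card_comp_of_bridge [Finite V] {G : SimpleGraph V} {e : Sym2 V}
    (hb : G.IsBridge e) (he : e ∈ G.edgeSet) :
    Nat.card G.ConnectedComponent + 1 ≤ Nat.card (G.deleteEdges {e}).ConnectedComponent := by
  revert hb he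
  refine Sym2.ind (fun x y hb he => ?_) e
  rw [isBridge_iff] at hb
  obtain ⟨hadj, hnr⟩ : G.Adj x y ∧ _ := ⟨he, hb⟩
  refine card_add_one_le (comp_map_surj (G.deleteEdges_le {s(x, y)}))
    (a := (G.deleteEdges {s(x, y)}).connectedComponentMk x)
    (b := (G.deleteEdges {s(x, y)}).connectedComponentMk y) ?_ ?_
  · intro hcon
    exact hnr (ConnectedComponent.eq.mp hcon)
  · simp only [ConnectedComponent.map_mk, Hom.ofLE_apply]
    exact ConnectedComponent.eq.mpr hadj.reachable

lemma main_bound [Fintype V] :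
    ∀ (m : ℕ) (G : SimpleGraph V), G.edgeSet.ncard = m → isBipartite G → globCactus G →
      3 * m + 4 * Nat.card G.ConnectedComponent ≤ 4 * Fintype.card V := by
  intro m
  induction m using Nat.strong_induction_on with
  | _ m ih =>
    intro G hm hbip hglob
    classical
    have hmk_surj : Function.Surjective G.connectedComponentMk := fun C => C.exists_rep
    have hcc_le : Nat.card G.ConnectedComponent ≤ Fintype.card V := by
      have := Nat.card_le_card_of_surjective _ hmk_surj
      simpa [Nat.card_eq_fintype_card] using this
    rcases Nat.eq_zero_or_pos m with hm0 | hmpos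
    · omega
    have hne : G.edgeSet.Nonempty := Set.nonempty_of_ncard_ne_zero (by omega)
    obtain ⟨e₀, he₀⟩ := hne
    by_cases hbr : G.IsBridge e₀
    · have h1 : (G.deleteEdges {e₀}).edgeSet.ncard = m - 1 := by
        rw [edgeSet_deleteEdges, Set.ncard_diff_singleton_of_mem he₀, hm]
      have hIH := ih (m - 1) (by omega) (G.deleteEdges {e₀}) h1
        (bip_anti (G.deleteEdges_le _) hbip) (glob_anti (G.deleteEdges_le _) hglob)
      have hb := card_comp_of_bridge hbr he₀
      omega
    · have hex : ∃ (a : V) (c : G.Walk a a), c.IsCycle ∧ e₀ ∈ c.edges := by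
        by_contra hno
        push_neg at hno
        exact hbr ((isBridge_iff_mem_and_forall_cycle_notMem he₀).mpr
          (fun u p hp => hno u p hp))
      obtain ⟨a, c, hc, hec⟩ := hex
      obtain ⟨A, hA⟩ := hbip
      have hlen4 : 4 ≤ c.length := by
        have h3 := hc.three_le_length
        have hev : Even c.length := (walk_even hA c).mpr Iff.rfl
        obtain ⟨k, hk⟩ := hev
        omega
      have hnodup := hc.isTrail.edges_nodup
      have hcardE : c.edges.toFinset.card = c.length := by
        rw [List.toFinset_card_of_nodup hnodup, Walk.length_edges]
      have hcard_erase : 3 ≤ (c.edges.toFinset.erase e₀).card := by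
        have := Finset.card_erase_of_mem (List.mem_toFinset.mpr hec)
        omega
      obtain ⟨s, hst, hs3⟩ := Finset.exists_subset_card_eq hcard_erase
      obtain ⟨f₁, f₂, f₃, h12, h13, h23, hseq⟩ := Finset.card_eq_three.mp hs3
      have hmem : ∀ f ∈ s, f ∈ c.edges ∧ f ≠ e₀ := by
        intro f hf
        have := hst hf
        rw [Finset.mem_erase, List.mem_toFinset] at this
        exact ⟨this.2, this.1⟩
      have hf₁ := hmem f₁ (by rw [hseq]; simp)
      have hf₂ := hmem f₂ (by rw [hseq]; simp)
      have hf₃ := hmem f₃ (by rw [hseq]; simp)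
      set G₁ := G.deleteEdges {e₀} with hG₁
      set G₂ := G₁.deleteEdges {f₁} with hG₂
      set G₃ := G₂.deleteEdges {f₂} with hG₃
      set G₄ := G₃.deleteEdges {f₃} with hG₄
      have hle₁ : G₁ ≤ G := G.deleteEdges_le _
      have hle₂ : G₂ ≤ G₁ := G₁.deleteEdges_le _
      have hle₃ : G₃ ≤ G₂ := G₂.deleteEdges_le _
      have hle₄ : G₄ ≤ G₃ := G₃.deleteEdges_le _
      -- edge set memberships
      have hE₁ : G₁.edgeSet = G.edgeSet \ {e₀} := edgeSet_deleteEdges _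
      have hE₂ : G₂.edgeSet = G₁.edgeSet \ {f₁} := edgeSet_deleteEdges _
      have hE₃ : G₃.edgeSet = G₂.edgeSet \ {f₂} := edgeSet_deleteEdges _
      have hE₄ : G₄.edgeSet = G₃.edgeSet \ {f₃} := edgeSet_deleteEdges _
      have hf₁E : f₁ ∈ G₁.edgeSet := by
        rw [hE₁]; exact ⟨c.edges_subset_edgeSet hf₁.1, by simp [hf₁.2]⟩
      have hf₂E : f₂ ∈ G₂.edgeSet := by
        rw [hE₂, hE₁]
        exact ⟨⟨c.edges_subset_edgeSet hf₂.1, by simp [hf₂.2]⟩, by simp [h12.symm]⟩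
      have hf₃E : f₃ ∈ G₃.edgeSet := by
        rw [hE₃, hE₂, hE₁]
        exact ⟨⟨⟨c.edges_subset_edgeSet hf₃.1, by simp [hf₃.2]⟩, by simp [h13.symm]⟩,
          by simp [h23.symm]⟩
      -- bridges
      have hbr₁ : G₁.IsBridge f₁ :=
        (isBridge_iff_mem_and_forall_cycle_notMem hf₁E).mpr
          (no_cycle_del hglob hc hec le_rfl hf₁.1)
      have hbr₂ : G₂.IsBridge f₂ :=
        (isBridge_iff_mem_and_forall_cycle_notMem hf₂E).mpr
          (no_cycle_del hglob hc hec hle₂ hf₂.1)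
      have hbr₃ : G₃.IsBridge f₃ :=
        (isBridge_iff_mem_and_forall_cycle_notMem hf₃E).mpr
          (no_cycle_del hglob hc hec (hle₃.trans hle₂) hf₃.1)
      -- component counts
      have hc₁ : Nat.card G.ConnectedComponent ≤ Nat.card G₁.ConnectedComponent :=
        card_comp_le hle₁
      have hc₂ : Nat.card G₁.ConnectedComponent + 1 ≤ Nat.card G₂.ConnectedComponent :=
        card_comp_of_bridge hbr₁ hf₁E
      have hc₃ : Nat.card G₂.ConnectedComponent + 1 ≤ Nat.card G₃.ConnectedComponent :=
        card_comp_of_bridge hbr₂ hf₂E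
      have hc₄ : Nat.card G₃.ConnectedComponent + 1 ≤ Nat.card G₄.ConnectedComponent :=
        card_comp_of_bridge hbr₃ hf₃E
      -- edge counts
      have hn₁ : G₁.edgeSet.ncard = m - 1 := by
        rw [hE₁, Set.ncard_diff_singleton_of_mem he₀, hm]
      have hn₂ : G₂.edgeSet.ncard = m - 2 := by
        rw [hE₂, Set.ncard_diff_singleton_of_mem hf₁E, hn₁]
        omega
      have hn₃ : G₃.edgeSet.ncard = m - 3 := by
        rw [hE₃, Set.ncard_diff_singleton_of_mem hf₂E, hn₂]
        omega
      have hn₄ : G₄.edgeSet.ncard = m - 4 := by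
        rw [hE₄, Set.ncard_diff_singleton_of_mem hf₃E, hn₃]
        omega
      have hm4 : 4 ≤ m := by
        have h1 : 0 < G₃.edgeSet.ncard := by
          rw [Set.ncard_pos (Set.toFinite _)]
          exact ⟨f₃, hf₃E⟩
        have h2 : 0 < G₂.edgeSet.ncard := by
          rw [Set.ncard_pos (Set.toFinite _)]
          exact ⟨f₂, hf₂E⟩
        have h3 : 0 < G₁.edgeSet.ncard := by
          rw [Set.ncard_pos (Set.toFinite _)]
          exact ⟨f₁, hf₁E⟩
        omega
      have hle₄₁ : G₄ ≤ G := hle₄.trans (hle₃.trans (hle₂.trans hle₁))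
      have hIH := ih (m - 4) (by omega) G₄ hn₄
        (bip_anti hle₄₁ ⟨A, hA⟩) (glob_anti hle₄₁ hglob)
      omega

end Lemmas

theorem stmt14 {V : Type*} [Fintype V] (H : SimpleGraph V)
    (hn : 4 ≤ Fintype.card V) (hbip : isBipartite H)
    (hcac : allComponentsCactus H) :
    4 * Fintype.card V ≥ 3 * H.edgeSet.ncard + 4 := by
  have hglob := glob_of_components hcac
  have hmain := main_bound H.edgeSet.ncard H rfl hbip hglob
  have hVne : Nonempty V := by
    rw [← Fintype.card_pos_iff]
    omega
  have : Nonempty H.ConnectedComponent := ⟨H.connectedComponentMk hVne.some⟩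
  have hpos : 0 < Nat.card H.ConnectedComponent := Nat.card_pos
  omega
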